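/- For an element β of the wreath product G_n viewed as a matrix, let J̄(β) = {i : β_{ii} = 1} and ε_{J̄(β)} = Π_{i∈J̄(β)} ε_i. Then the map β ↦ β·ε_{J̄(β)} is a bijection from G_n onto the set of matrices γ ∈ Ḡ_n of degree n (no diagonal entry equal to 1) such that for every i, the i-th row of γ is nonzero if and only if the i-th column of γ is nonzero. -/

import Mathlib

open MonoidAlgebra

/-- The group algebra `ℤ[G]`, used as an ambient ring in which `G ∪ {0}` embeds as
`{0} ∪ {single g 1 | g ∈ G}`. -/
abbrev GA (G : Type*) [Group G] := MonoidAlgebra ℤ G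

/-- `a` is an entry in `G ∪ {0}`. -/
def IsEnt {G : Type*} [Group G] (a : GA G) : Prop := a = 0 ∨ ∃ g : G, a = single g 1

/-- An `n × n` matrix with entries in `G ∪ {0}` such that every row and every column
contains at most one nonzero entry. -/
def IsRC {G : Type*} [Group G] {n : ℕ} (M : Matrix (Fin n) (Fin n) (GA G)) : Prop :=
  (∀ i, {j | M i j ≠ 0}.Subsingleton) ∧ (∀ j, {i | M i j ≠ 0}.Subsingleton) ∧
    ∀ i j, IsEnt (M i j)

theorem IsEnt.mul {G : Type*} [Group G] {a b : GA G} (ha : IsEnt a) (hb : IsEnt b) :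
    IsEnt (a * b) := by
  rcases ha with ha | ⟨g, rfl⟩
  · exact Or.inl (by simp [ha])
  rcases hb with hb | ⟨g', rfl⟩
  · exact Or.inl (by simp [hb])
  · exact Or.inr ⟨g * g', by simp [MonoidAlgebra.single_mul_single]⟩

theorem exists_of_mul_ne_zero {G : Type*} [Group G] {n : ℕ}
    {M N : Matrix (Fin n) (Fin n) (GA G)} {i j : Fin n} (h : (M * N) i j ≠ 0) :
    ∃ k, M i k ≠ 0 ∧ N k j ≠ 0 := by
  by_contra hc
  push_neg at hc
  apply h
  rw [Matrix.mul_apply]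
  refine Finset.sum_eq_zero fun k _ => ?_
  by_cases hk : M i k = 0
  · simp [hk]
  · simp [hc k hk]

/-- The semigroup `Ḡ_n` of `n × n` matrices over `G ∪ {0}` with at most one nonzero entry
in each row and each column, realized as a submonoid of the matrix ring over `ℤ[G]`. -/
def GBar (G : Type*) [Group G] (n : ℕ) : Submonoid (Matrix (Fin n) (Fin n) (GA G)) where
  carrier := {M | IsRC M}
  one_mem' := by
    have key : ∀ a b : Fin n, (1 : Matrix (Fin n) (Fin n) (GA G)) a b ≠ 0 → a = b := by
      intro a b h
      by_contra hab
      simp [Matrix.one_apply, hab] at h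
    refine ⟨fun i => ?_, fun j => ?_, fun i j => ?_⟩
    · intro a ha b hb
      exact (key i a ha).symm.trans (key i b hb)
    · intro a ha b hb
      exact (key a j ha).trans (key b j hb).symm
    · by_cases h : i = j
      · subst h
        exact Or.inr ⟨1, by simp [Matrix.one_apply, MonoidAlgebra.one_def]⟩
      · exact Or.inl (by simp [Matrix.one_apply, h])
  mul_mem' := by
    rintro M N ⟨hMr, hMc, hMe⟩ ⟨hNr, hNc, hNe⟩
    refine ⟨fun i => ?_, fun j => ?_, fun i j => ?_⟩
    · intro a ha b hb
      obtain ⟨k, hk1, hk2⟩ := exists_of_mul_ne_zero ha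
      obtain ⟨k', hk1', hk2'⟩ := exists_of_mul_ne_zero hb
      have : k = k' := hMr i hk1 hk1'
      subst this
      exact hNr k hk2 hk2'
    · intro a ha b hb
      obtain ⟨k, hk1, hk2⟩ := exists_of_mul_ne_zero ha
      obtain ⟨k', hk1', hk2'⟩ := exists_of_mul_ne_zero hb
      have : k = k' := hNc j hk2 hk2'
      subst this
      exact hMc k hk1 hk1'
    · by_cases h : (M * N) i j = 0
      · exact Or.inl h
      obtain ⟨k, hk1, hk2⟩ := exists_of_mul_ne_zero h
      have hsum : (M * N) i j = M i k * N k j := by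
        rw [Matrix.mul_apply]
        refine Finset.sum_eq_single k (fun b _ hb => ?_) (by simp)
        by_cases hbz : M i b = 0
        · simp [hbz]
        · exact absurd (hMr i hbz hk1) hb
      rw [hsum]
      exact (hMe i k).mul (hNe k j)

/-- The idempotent `ε_j ∈ Ḡ_n`: the diagonal matrix with `0` in position `(j,j)` and
`1` in the other diagonal positions. -/
noncomputable def epsEl (G : Type*) [Group G] {n : ℕ} (j : Fin n) : GBar G n :=
  ⟨Matrix.diagonal (fun i => if i = j then 0 else 1), by
    have key : ∀ a b : Fin n,
        Matrix.diagonal (fun i : Fin n => if i = j then (0 : GA G) else 1) a b ≠ 0 → a = b := by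
      intro a b h
      by_contra hab
      simp [Matrix.diagonal_apply_ne _ hab] at h
    refine ⟨fun i => ?_, fun k => ?_, fun i k => ?_⟩
    · intro a ha b hb
      exact (key i a ha).symm.trans (key i b hb)
    · intro a ha b hb
      exact (key a k ha).trans (key b k hb).symm
    · by_cases h : i = k
      · subst h
        by_cases hij : i = j
        · exact Or.inl (by simp [Matrix.diagonal_apply_eq, hij])
        · exact Or.inr ⟨1, by simp [Matrix.diagonal_apply_eq, hij, MonoidAlgebra.one_def]⟩
      · exact Or.inl (by simp [Matrix.diagonal_apply_ne _ h])⟩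

/-- The action of `S_n` on `G^n` by permuting coordinates. -/
def permHom (G : Type*) [Group G] (n : ℕ) : Equiv.Perm (Fin n) →* MulAut (Fin n → G) where
  toFun σ :=
    { toFun := fun g => g ∘ σ.symm
      invFun := fun g => g ∘ σ
      left_inv := fun g => by ext i; simp
      right_inv := fun g => by ext i; simp
      map_mul' := fun g h => rfl }
  map_one' := by ext g i; simp [Equiv.Perm.one_def]
  map_mul' := fun σ τ => by ext g i; simp [Equiv.Perm.mul_def]

/-- The wreath product `G_n = G^n ⋊ S_n`. -/
abbrev Wreath (G : Type*) [Group G] (n : ℕ) :=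
  SemidirectProduct (Fin n → G) (Equiv.Perm (Fin n)) (permHom G n)

/-- The monoid embedding of the wreath product `G_n` into the matrices over `G ∪ {0}`:
`(g,σ)` goes to the matrix whose `(i,j)` entry is `g_i` if `σ(j) = i` and `0` otherwise. -/
noncomputable def wreathHom (G : Type*) [Group G] (n : ℕ) :
    Wreath G n →* Matrix (Fin n) (Fin n) (GA G) where
  toFun x := Matrix.of fun i j => if x.right j = i then single (x.left i) 1 else 0
  map_one' := by
    apply Matrix.ext
    intro i j
    by_cases h : i = j <;>
      simp [Matrix.one_apply, h, MonoidAlgebra.one_def, eq_comm]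
  map_mul' := by
    rintro ⟨a, σ⟩ ⟨b, τ⟩
    apply Matrix.ext
    intro i j
    rw [Matrix.mul_apply, Finset.sum_eq_single (τ j)]
    · simp only [SemidirectProduct.mul_left, SemidirectProduct.mul_right, Matrix.of_apply]
      rw [Equiv.Perm.mul_apply]
      by_cases h : σ (τ j) = i
      · rw [if_pos h, if_pos h]
        simp only [if_true]
        rw [MonoidAlgebra.single_mul_single]
        congr 1
        have hs : σ.symm i = τ j := by rw [← h]; simp
        simp [permHom, Pi.mul_apply, hs]
      · rw [if_neg h, if_neg h, zero_mul]
    · intro b' _ hb'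
      simp only [Matrix.of_apply]
      exact mul_eq_zero_of_right _ (if_neg fun hc => hb' hc.symm)
    · simp

theorem wreathHom_mem_GBar (G : Type*) [Group G] (n : ℕ) (x : Wreath G n) :
    wreathHom G n x ∈ GBar G n := by
  have key : ∀ i j : Fin n, wreathHom G n x i j ≠ 0 → x.right j = i := by
    intro i j h
    by_contra hc
    simp [wreathHom, hc] at h
  refine ⟨fun i => ?_, fun j => ?_, fun i j => ?_⟩
  · intro a ha b hb
    exact x.right.injective ((key i a ha).trans (key i b hb).symm)
  · intro a ha b hb
    exact (key a j ha).symm.trans (key b j hb)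
  · by_cases h : x.right j = i
    · exact Or.inr ⟨x.left i, by simp [wreathHom, h]⟩
    · exact Or.inl (by simp [wreathHom, h])

/-- The wreath product `G_n` as the submonoid of `Ḡ_n` of matrices with exactly one
nonzero entry in each row and each column. -/
noncomputable def GFull (G : Type*) [Group G] (n : ℕ) :
    Submonoid (Matrix (Fin n) (Fin n) (GA G)) :=
  MonoidHom.mrange (wreathHom G n)

theorem GFull_le_GBar (G : Type*) [Group G] (n : ℕ) : GFull G n ≤ GBar G n := by
  rintro M ⟨x, rfl⟩
  exact wreathHom_mem_GBar G n x

/-- An element of the wreath product, viewed inside `Ḡ_n`. -/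
noncomputable def wEl {G : Type*} [Group G] {n : ℕ} (x : Wreath G n) : GBar G n :=
  ⟨wreathHom G n x, wreathHom_mem_GBar G n x⟩

open scoped Classical

/-- `ε_T = Π_{i ∈ T} ε_i ∈ Ḡ_n` (the factors pairwise commute; the product is taken in
increasing order of the indices). -/
noncomputable def epsProd (G : Type*) [Group G] {n : ℕ} (T : Finset (Fin n)) : GBar G n :=
  ((T.sort (· ≤ ·)).map fun i => epsEl G i).prod

/-- `J̄(β) = {i | β_{ii} = 1}`. -/
noncomputable def Jbar {G : Type*} [Group G] {n : ℕ} (β : GBar G n) : Finset (Fin n) :=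
  Finset.univ.filter fun i => (β : Matrix (Fin n) (Fin n) (GA G)) i i = 1


section Aux
variable {G : Type*} [Group G] {n : ℕ}

lemma GA_single_ne_zero (g : G) : (single g 1 : GA G) ≠ 0 := by
  exact MonoidAlgebra.single_ne_zero.mpr one_ne_zero

lemma GA_single_eq_one_iff (g : G) : (single g 1 : GA G) = 1 ↔ g = 1 := by
  rw [MonoidAlgebra.one_def]
  exact MonoidAlgebra.single_left_inj one_ne_zero

lemma diag_list_prod (l : List (Fin n)) :
    (l.map fun i => Matrix.diagonal (fun k => if k = i then (0 : GA G) else 1)).prod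
      = Matrix.diagonal (fun k => if k ∈ l then 0 else 1) := by
  induction l with
  | nil => simp
  | cons a l ih =>
      rw [List.map_cons, List.prod_cons, ih, Matrix.diagonal_mul_diagonal]
      apply Matrix.ext
      intro k j
      by_cases hkj : k = j
      · subst hkj
        by_cases h1 : k = a <;> by_cases h2 : k ∈ l <;>
          simp [Matrix.diagonal_apply_eq, h1, h2]
      · simp [Matrix.diagonal_apply_ne _ hkj]

lemma epsProd_coe (T : Finset (Fin n)) :
    ((epsProd G T : GBar G n) : Matrix (Fin n) (Fin n) (GA G))
      = Matrix.diagonal (fun k => if k ∈ T then 0 else 1) := by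
  unfold epsProd
  rw [SubmonoidClass.coe_list_prod, List.map_map]
  have h1 : ((Subtype.val : GBar G n → _) ∘ fun i => epsEl G i)
      = fun i : Fin n => Matrix.diagonal (fun k => if k = i then (0 : GA G) else 1) := rfl
  rw [h1, diag_list_prod]
  ext k
  simp [Finset.mem_sort]

lemma gamma_apply (β : GBar G n) (i j : Fin n) :
    ((β * epsProd G (Jbar β) : GBar G n) : Matrix (Fin n) (Fin n) (GA G)) i j
      = if j ∈ Jbar β then 0 else (β : Matrix (Fin n) (Fin n) (GA G)) i j := by
  rw [Submonoid.coe_mul, epsProd_coe, Matrix.mul_diagonal]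
  by_cases h : j ∈ Jbar β <;> simp [h]

lemma wreathHom_apply (x : Wreath G n) (i j : Fin n) :
    wreathHom G n x i j = if x.right j = i then single (x.left i) 1 else 0 := rfl

lemma wh_ne_zero (x : Wreath G n) (i j : Fin n) :
    wreathHom G n x i j ≠ 0 ↔ x.right j = i := by
  rw [wreathHom_apply]
  by_cases h : x.right j = i <;> simp [h, GA_single_ne_zero]

lemma wh_diag_one (x : Wreath G n) (i : Fin n) :
    wreathHom G n x i i = 1 ↔ (x.right i = i ∧ x.left i = 1) := by
  rw [wreathHom_apply]
  by_cases h : x.right i = i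
  · simp [h, GA_single_eq_one_iff]
  · simp [h, (zero_ne_one (α := GA G))]

lemma mem_Jbar_iff (β : GBar G n) (i : Fin n) :
    i ∈ Jbar β ↔ (β : Matrix (Fin n) (Fin n) (GA G)) i i = 1 := by
  simp [Jbar]

end Aux

section Aux2
variable {G : Type*} [Group G] {n : ℕ}

lemma mem_GFull_of (M : GBar G n)
    (_hRow : ∀ i, ∃ j, (M : Matrix (Fin n) (Fin n) (GA G)) i j ≠ 0)
    (hCol : ∀ j, ∃ i, (M : Matrix (Fin n) (Fin n) (GA G)) i j ≠ 0) :
    (M : Matrix (Fin n) (Fin n) (GA G)) ∈ GFull G n := by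
  obtain ⟨hr, hc, he⟩ := M.2
  choose f hf using hCol
  have hinj : Function.Injective f := by
    intro a b hab
    exact hr (f a) (hf a) (by rw [hab]; exact hf b)
  have hbij : Function.Bijective f := (Finite.injective_iff_bijective).mp hinj
  set σ : Equiv.Perm (Fin n) := Equiv.ofBijective f hbij with hσ
  have hσapp : ∀ j, σ j = f j := fun j => rfl
  have hg : ∀ i, ∃ g : G, (M : Matrix (Fin n) (Fin n) (GA G)) i (σ.symm i) = single g 1 := by
    intro i
    have hne : (M : Matrix (Fin n) (Fin n) (GA G)) i (σ.symm i) ≠ 0 := by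
      have := hf (σ.symm i)
      rwa [← hσapp, Equiv.apply_symm_apply] at this
    rcases he i (σ.symm i) with h0 | ⟨g, hgg⟩
    · exact absurd h0 hne
    · exact ⟨g, hgg⟩
  choose g hgspec using hg
  refine ⟨⟨g, σ⟩, ?_⟩
  apply Matrix.ext
  intro i j
  rw [wreathHom_apply]
  dsimp only
  by_cases h : σ j = i
  · rw [if_pos h]
    have hj : σ.symm i = j := by rw [← h, Equiv.symm_apply_apply]
    rw [← hj]
    exact (hgspec i).symm
  · rw [if_neg h]
    by_contra hne
    have hij : i = f j := hc j (fun h0 => hne h0.symm) (hf j)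
    exact h (by rw [hσapp, ← hij])

end Aux2

section Aux3
variable {G : Type*} [Group G] {n : ℕ}

lemma GA_one_ne_zero : (1 : GA G) ≠ 0 := by
  rw [MonoidAlgebra.one_def]; exact GA_single_ne_zero 1

lemma GA_zero_ne_one : (0 : GA G) ≠ 1 := fun h => GA_one_ne_zero h.symm

lemma entry_of_mem_Jbar (x : Wreath G n) (β : GBar G n)
    (hx : wreathHom G n x = (β : Matrix (Fin n) (Fin n) (GA G))) (i j : Fin n)
    (hj : j ∈ Jbar β) :
    (β : Matrix (Fin n) (Fin n) (GA G)) i j = if j = i then 1 else 0 := by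
  have h1 : x.right j = j ∧ x.left j = 1 := by
    rw [← wh_diag_one x j, hx]
    exact (mem_Jbar_iff β j).mp hj
  rw [← hx, wreathHom_apply, h1.1]
  by_cases h : j = i
  · subst h
    rw [if_pos rfl, if_pos rfl, h1.2, ← MonoidAlgebra.one_def]
  · rw [if_neg h, if_neg h]

end Aux3

/-- The map `β ↦ β · ε_{J̄(β)}` is a bijection from the wreath product `G_n ⊆ Ḡ_n`
(matrices with exactly one nonzero entry in each row and column) onto the set of matrices
`γ ∈ Ḡ_n` of degree `n` (no diagonal entry equal to `1`) such that for every `i` the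
`i`-th row of `γ` is nonzero if and only if the `i`-th column of `γ` is nonzero. -/
theorem bijOn_mul_epsJbar (G : Type*) [Group G] (n : ℕ) :
    Set.BijOn (fun β : GBar G n => β * epsProd G (Jbar β))
      {β : GBar G n | (β : Matrix (Fin n) (Fin n) (GA G)) ∈ GFull G n}
      {γ : GBar G n | (∀ k, (γ : Matrix (Fin n) (Fin n) (GA G)) k k ≠ 1) ∧
        ∀ i, (∃ j, (γ : Matrix (Fin n) (Fin n) (GA G)) i j ≠ 0) ↔
          (∃ j, (γ : Matrix (Fin n) (Fin n) (GA G)) j i ≠ 0)} := by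
  classical
  refine ⟨?_, ?_, ?_⟩
  -- MapsTo
  · rintro β hβ
    obtain ⟨x, hx⟩ := hβ
    have hβne : ∀ i j, (β : Matrix (Fin n) (Fin n) (GA G)) i j ≠ 0 ↔ x.right j = i := by
      intro i j; rw [← hx]; exact wh_ne_zero x i j
    have hJ : ∀ i, i ∈ Jbar β ↔ (x.right i = i ∧ x.left i = 1) := by
      intro i; rw [mem_Jbar_iff, ← hx]; exact wh_diag_one x i
    have hJfix : ∀ i, i ∈ Jbar β → x.right i = i := fun i hi => ((hJ i).mp hi).1
    have hJsymm : ∀ i, x.right.symm i ∈ Jbar β ↔ i ∈ Jbar β := by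
      intro i
      constructor
      · intro h
        have h1 : x.right (x.right.symm i) = x.right.symm i := hJfix _ h
        rw [Equiv.apply_symm_apply] at h1
        rwa [← h1] at h
      · intro h
        have h1 := hJfix i h
        have h2 : x.right.symm i = i := by
          apply x.right.injective
          rw [Equiv.apply_symm_apply, h1]
        rwa [h2]
    constructor
    · intro k
      rw [gamma_apply]
      by_cases hk : k ∈ Jbar β
      · rw [if_pos hk]; exact GA_zero_ne_one
      · rw [if_neg hk]
        intro h1
        exact hk ((mem_Jbar_iff β k).mpr h1)
    · intro i
      have hA : (∃ j, ((β * epsProd G (Jbar β) : GBar G n) :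
          Matrix (Fin n) (Fin n) (GA G)) i j ≠ 0) ↔ i ∉ Jbar β := by
        constructor
        · rintro ⟨j, hj⟩ hi
          rw [gamma_apply] at hj
          by_cases hjJ : j ∈ Jbar β
          · rw [if_pos hjJ] at hj; exact hj rfl
          · rw [if_neg hjJ] at hj
            have h1 := (hβne i j).mp hj
            have hxi := hJfix i hi
            have h2 : j = i := x.right.injective (by rw [h1, hxi])
            exact hjJ (h2 ▸ hi)
        · intro hi
          refine ⟨x.right.symm i, ?_⟩
          rw [gamma_apply, if_neg (fun h => hi ((hJsymm i).mp h))]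
          exact (hβne i _).mpr (x.right.apply_symm_apply i)
      have hB : (∃ j, ((β * epsProd G (Jbar β) : GBar G n) :
          Matrix (Fin n) (Fin n) (GA G)) j i ≠ 0) ↔ i ∉ Jbar β := by
        constructor
        · rintro ⟨j, hj⟩ hi
          rw [gamma_apply, if_pos hi] at hj
          exact hj rfl
        · intro hi
          refine ⟨x.right i, ?_⟩
          rw [gamma_apply, if_neg hi]
          exact (hβne _ i).mpr rfl
      rw [hA, hB]
  -- InjOn
  · rintro β₁ hβ₁ β₂ hβ₂ heq
    obtain ⟨x₁, hx₁⟩ := hβ₁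
    obtain ⟨x₂, hx₂⟩ := hβ₂
    have heqM : ∀ i j,
        (if j ∈ Jbar β₁ then 0 else (β₁ : Matrix (Fin n) (Fin n) (GA G)) i j)
          = (if j ∈ Jbar β₂ then 0 else (β₂ : Matrix (Fin n) (Fin n) (GA G)) i j) := by
      intro i j
      rw [← gamma_apply, ← gamma_apply]
      exact congrArg (fun z : GBar G n => (z : Matrix (Fin n) (Fin n) (GA G)) i j) heq
    have key : ∀ (β : GBar G n) (x : Wreath G n),
        wreathHom G n x = (β : Matrix (Fin n) (Fin n) (GA G)) → ∀ j,
        (j ∈ Jbar β ↔ ∀ i,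
          (if j ∈ Jbar β then 0 else (β : Matrix (Fin n) (Fin n) (GA G)) i j) = 0) := by
      intro β x hx j
      constructor
      · intro hj i; rw [if_pos hj]
      · intro h
        by_contra hj
        have h1 := h (x.right j)
        rw [if_neg hj] at h1
        exact ((wh_ne_zero x (x.right j) j).mpr rfl) (by rw [hx]; exact h1)
    have hJeq : Jbar β₁ = Jbar β₂ := by
      ext j
      rw [key β₁ x₁ hx₁ j, key β₂ x₂ hx₂ j]
      constructor
      · intro h i; rw [← heqM i j]; exact h i
      · intro h i; rw [heqM i j]; exact h i
    apply Subtype.ext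
    apply Matrix.ext
    intro i j
    by_cases hj : j ∈ Jbar β₁
    · rw [entry_of_mem_Jbar x₁ β₁ hx₁ i j hj,
        entry_of_mem_Jbar x₂ β₂ hx₂ i j (hJeq ▸ hj)]
    · have h1 := heqM i j
      rw [if_neg hj, if_neg (hJeq ▸ hj : j ∉ Jbar β₂)] at h1
      exact h1
  -- SurjOn
  · rintro γ ⟨hdiag, hrc⟩
    set S : Finset (Fin n) :=
      Finset.univ.filter (fun i => ∀ j, (γ : Matrix (Fin n) (Fin n) (GA G)) i j = 0) with hS
    have hmemS : ∀ i, i ∈ S ↔ ∀ j, (γ : Matrix (Fin n) (Fin n) (GA G)) i j = 0 := by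
      intro i; simp [hS]
    have hScol : ∀ i, i ∈ S ↔ ∀ j, (γ : Matrix (Fin n) (Fin n) (GA G)) j i = 0 := by
      intro i
      rw [hmemS]
      constructor
      · intro h j
        by_contra hne
        obtain ⟨k, hk⟩ := (hrc i).mpr ⟨j, hne⟩
        exact hk (h k)
      · intro h j
        by_contra hne
        obtain ⟨k, hk⟩ := (hrc i).mp ⟨j, hne⟩
        exact hk (h k)
    set B : Matrix (Fin n) (Fin n) (GA G) :=
      fun i j => if i = j ∧ i ∈ S then 1 else (γ : Matrix (Fin n) (Fin n) (GA G)) i j with hB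
    obtain ⟨hr, hc, he⟩ := γ.2
    have hBapp : ∀ i j, B i j
        = if i = j ∧ i ∈ S then 1 else (γ : Matrix (Fin n) (Fin n) (GA G)) i j :=
      fun i j => rfl
    have hBr : ∀ i j, i ∉ S → B i j = (γ : Matrix (Fin n) (Fin n) (GA G)) i j := by
      intro i j hi
      rw [hBapp]
      exact if_neg (fun h => hi h.2)
    have hBmem : B ∈ GBar G n := by
      refine ⟨fun i => ?_, fun j => ?_, fun i j => ?_⟩
      · intro a ha b hb
        by_cases hi : i ∈ S
        · have key : ∀ c, B i c ≠ 0 → i = c := by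
            intro c hcne
            by_contra hic
            rw [hBapp] at hcne
            simp only [hic, false_and, if_false] at hcne
            exact hcne ((hmemS i).mp hi c)
          exact (key a ha).symm.trans (key b hb)
        · rw [Set.mem_setOf_eq, hBr i a hi] at ha
          rw [Set.mem_setOf_eq, hBr i b hi] at hb
          exact hr i ha hb
      · intro a ha b hb
        by_cases hj : j ∈ S
        · have key : ∀ c, B c j ≠ 0 → c = j := by
            intro c hcne
            by_contra hcj
            rw [hBapp] at hcne
            simp only [hcj, false_and, if_false] at hcne
            exact hcne ((hScol j).mp hj c)
          exact (key a ha).trans (key b hb).symm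
        · have key : ∀ c, B c j = (γ : Matrix (Fin n) (Fin n) (GA G)) c j := by
            intro c
            rw [hBapp]
            refine if_neg (fun h => hj ?_)
            rw [← h.1]; exact h.2
          rw [Set.mem_setOf_eq, key a] at ha
          rw [Set.mem_setOf_eq, key b] at hb
          exact hc j ha hb
      · rw [hBapp]
        by_cases h : i = j ∧ i ∈ S
        · rw [if_pos h]
          exact Or.inr ⟨1, MonoidAlgebra.one_def⟩
        · rw [if_neg h]
          exact he i j
    set β : GBar G n := ⟨B, hBmem⟩ with hβ
    have hβmem : (β : Matrix (Fin n) (Fin n) (GA G)) ∈ GFull G n := by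
      apply mem_GFull_of
      · intro i
        by_cases hi : i ∈ S
        · refine ⟨i, ?_⟩
          show B i i ≠ 0
          rw [hBapp]
          simp only [hi, and_true, if_pos rfl]
          exact GA_one_ne_zero
        · obtain ⟨j, hj⟩ : ∃ j, (γ : Matrix (Fin n) (Fin n) (GA G)) i j ≠ 0 := by
            by_contra hcon
            push_neg at hcon
            exact hi ((hmemS i).mpr hcon)
          refine ⟨j, ?_⟩
          show B i j ≠ 0
          rw [hBr i j hi]
          exact hj
      · intro j
        by_cases hj : j ∈ S
        · refine ⟨j, ?_⟩
          show B j j ≠ 0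
          rw [hBapp]
          simp only [hj, and_true, if_pos rfl]
          exact GA_one_ne_zero
        · obtain ⟨i, hi⟩ : ∃ i, (γ : Matrix (Fin n) (Fin n) (GA G)) i j ≠ 0 := by
            by_contra hcon
            push_neg at hcon
            exact hj ((hScol j).mpr hcon)
          refine ⟨i, ?_⟩
          show B i j ≠ 0
          rw [hBapp, if_neg (fun h : i = j ∧ i ∈ S => hj (h.1 ▸ h.2))]
          exact hi
    have hJS : Jbar β = S := by
      ext i
      rw [mem_Jbar_iff]
      show B i i = 1 ↔ i ∈ S
      constructor
      · intro h
        by_contra hi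
        rw [hBapp] at h
        simp only [hi, and_false, if_false] at h
        exact hdiag i h
      · intro hi
        rw [hBapp]
        simp [hi]
    refine ⟨β, hβmem, ?_⟩
    apply Subtype.ext
    apply Matrix.ext
    intro i j
    show ((β * epsProd G (Jbar β) : GBar G n) : Matrix (Fin n) (Fin n) (GA G)) i j
      = (γ : Matrix (Fin n) (Fin n) (GA G)) i j
    rw [gamma_apply, hJS]
    by_cases hj : j ∈ S
    · rw [if_pos hj, ((hScol j).mp hj i).symm]
    · rw [if_neg hj]
      show B i j = _
      rw [hBapp]
      exact if_neg (fun h : i = j ∧ i ∈ S => hj (h.1 ▸ h.2))
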